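/- Let g > 0 and q ≥ 1 an integer. For all reals ε, E, E′ with 2 < ε ≤ E ≤ E′ and every k₂ ∈ ℝ, the quantities Φ_q(k₂,E) and Φ_q(k₂,E′) are well defined and Φ_q(k₂,E′) − Φ_q(k₂,E) ≤ (q(ε−1)/(πg√(ε(ε−2)))) · (E′ − E). Consequently, if moreover Φ_q(k₂,E′) − Φ_q(k₂,E) ≥ 1 (as happens for consecutive solutions of the band equation Φ_q(k₂,·) − qω ∈ ℤ), then E′ − E ≥ πg√(ε(ε−2))/(q(ε−1)). (Separation of the surface energy band functions.) -/

import Mathlib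

/-- `φ(k,E) = (1/π) arctan((1/g)√((E + cos 2πk)² - 1))`. -/
noncomputable def phi (g : ℝ) (k E : ℝ) : ℝ :=
  (1 / Real.pi) * Real.arctan ((1 / g) * Real.sqrt ((E + Real.cos (2 * Real.pi * k)) ^ 2 - 1))

/-- `Φ_q(k₂,E) = ∑_{l=0}^{q-1} φ(k₂ + l/q, E)`. -/
noncomputable def Phiq (g : ℝ) (q : ℕ) (k₂ E : ℝ) : ℝ :=
  ∑ l ∈ Finset.range q, phi g (k₂ + (l : ℝ) / (q : ℝ)) E

lemma arctan_le_self' {t : ℝ} (ht : 0 ≤ t) : Real.arctan t ≤ t := by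
  have h1 : Real.arctan t < Real.pi / 2 := Real.arctan_lt_pi_div_two t
  have h2 : 0 ≤ Real.arctan t := by
    rw [← Real.arctan_zero]
    exact Real.arctan_strictMono.monotone ht
  calc Real.arctan t ≤ Real.tan (Real.arctan t) := Real.le_tan h2 h1
    _ = t := Real.tan_arctan t

lemma arctan_sub_le' {x y : ℝ} (hy : 0 ≤ y) (hxy : y ≤ x) :
    Real.arctan x - Real.arctan y ≤ x - y := by
  have hx : 0 ≤ x := le_trans hy hxy
  have hmul : x * (-y) < 1 := by nlinarith
  have h := Real.arctan_add hmul
  rw [Real.arctan_neg] at h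
  have hxy1 : (1:ℝ) ≤ 1 - x * (-y) := by nlinarith
  have h2 : Real.arctan x - Real.arctan y ≤ (x + -y) / (1 - x * (-y)) := by
    rw [sub_eq_add_neg, h]
    exact arctan_le_self' (div_nonneg (by linarith) (by linarith))
  have h3 : (x + -y) / (1 - x * (-y)) ≤ x - y := by
    have := div_le_self (a := x + -y) (by linarith) hxy1
    linarith
  linarith

set_option maxHeartbeats 800000 in
/-- Per-term Lipschitz bound. -/
lemma phi_diff_le (g : ℝ) (hg : 0 < g) (ε E E' : ℝ) (hε : 2 < ε) (hE : ε ≤ E)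
    (hEE' : E ≤ E') (k : ℝ) :
    phi g k E' - phi g k E
      ≤ ((ε - 1) / (Real.pi * g * Real.sqrt (ε * (ε - 2)))) * (E' - E) := by
  set c := Real.cos (2 * Real.pi * k) with hc
  have hc1 : -1 ≤ c := Real.neg_one_le_cos _
  have hc2 : c ≤ 1 := Real.cos_le_one _
  set a := ε - 1 with ha
  have ha1 : 1 < a := by simp [ha]; linarith
  set u := E + c with hu
  set u' := E' + c with hu'
  have hau : a ≤ u := by simp [ha, hu]; linarith
  have huu' : u ≤ u' := by simp [hu, hu']; linarith
  have hea : ε * (ε - 2) = a ^ 2 - 1 := by ring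
  set S := Real.sqrt (ε * (ε - 2)) with hSdef
  have hSpos : 0 < S := Real.sqrt_pos.mpr (by nlinarith)
  have hS2 : S ^ 2 = a ^ 2 - 1 := by rw [hSdef, Real.sq_sqrt] <;> nlinarith
  set x := Real.sqrt (u ^ 2 - 1) with hxdef
  set x' := Real.sqrt (u' ^ 2 - 1) with hx'def
  have hx2 : x ^ 2 = u ^ 2 - 1 := Real.sq_sqrt (by nlinarith)
  have hx'2 : x' ^ 2 = u' ^ 2 - 1 := Real.sq_sqrt (by nlinarith)
  have hxnn : 0 ≤ x := Real.sqrt_nonneg _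
  have hx'nn : 0 ≤ x' := Real.sqrt_nonneg _
  have hxx' : x ≤ x' := Real.sqrt_le_sqrt (by nlinarith)
  have hxpos : 0 < x := Real.sqrt_pos.mpr (by nlinarith)
  -- key: u*S ≤ a*x and u'*S ≤ a*x'
  have key : ∀ v : ℝ, a ≤ v → v * S ≤ a * Real.sqrt (v ^ 2 - 1) := by
    intro v hv
    have hv0 : 0 ≤ v := by linarith
    have h1 : v * S = Real.sqrt (v ^ 2 * (ε * (ε - 2))) := by
      rw [Real.sqrt_mul (sq_nonneg v), Real.sqrt_sq hv0]
    have h2 : a * Real.sqrt (v ^ 2 - 1) = Real.sqrt (a ^ 2 * (v ^ 2 - 1)) := by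
      rw [Real.sqrt_mul (sq_nonneg a), Real.sqrt_sq (by linarith)]
    rw [h1, h2]
    apply Real.sqrt_le_sqrt
    have hsq : a * a ≤ v * v := mul_le_mul hv hv (by linarith) hv0
    rw [hea]
    nlinarith [hsq]
  have k1 : u * S ≤ a * x := key u hau
  have k2 : u' * S ≤ a * x' := key u' (le_trans hau huu')
  -- x' - x ≤ (a/S)*(u'-u)
  have hstep : S * (x' - x) ≤ a * (u' - u) := by
    have hsum : 0 < x' + x := by linarith
    have hadd := add_le_add k1 k2
    have e2' := mul_le_mul_of_nonneg_right hadd (sub_nonneg.2 huu')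
    have final : S * (x' - x) * (x' + x) ≤ a * (u' - u) * (x' + x) := by
      calc S * (x' - x) * (x' + x) = (u * S + u' * S) * (u' - u) := by
            linear_combination S * hx'2 - S * hx2
        _ ≤ (a * x + a * x') * (u' - u) := e2'
        _ = a * (u' - u) * (x' + x) := by ring
    exact le_of_mul_le_mul_right final hsum
  -- arctan step
  have harg1 : (0:ℝ) ≤ (1 / g) * x := by positivity
  have harg2 : (1 / g) * x ≤ (1 / g) * x' := by
    apply mul_le_mul_of_nonneg_left hxx'; positivity
  have harc : Real.arctan ((1 / g) * x') - Real.arctan ((1 / g) * x)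
      ≤ (1 / g) * x' - (1 / g) * x := arctan_sub_le' harg1 harg2
  have hpi : 0 < Real.pi := Real.pi_pos
  have hphi : phi g k E' - phi g k E
      = (1 / Real.pi) * (Real.arctan ((1 / g) * x') - Real.arctan ((1 / g) * x)) := by
    simp only [phi, ← hc, ← hu, ← hu', ← hxdef, ← hx'def]
    ring
  rw [hphi]
  have hEu : E' - E = u' - u := by simp [hu, hu']
  rw [hEu]
  have h4 : (1 / Real.pi) * (Real.arctan ((1 / g) * x') - Real.arctan ((1 / g) * x))
      ≤ (1 / Real.pi) * ((1 / g) * (x' - x)) := by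
    apply mul_le_mul_of_nonneg_left _ (by positivity)
    linarith [harc]
  have h5 : x' - x ≤ a * (u' - u) / S := by
    rw [le_div_iff₀ hSpos]; linarith
  have h6 : (1 / Real.pi) * ((1 / g) * (x' - x))
      ≤ (1 / Real.pi) * ((1 / g) * (a * (u' - u) / S)) := by
    apply mul_le_mul_of_nonneg_left _ (by positivity)
    apply mul_le_mul_of_nonneg_left h5 (by positivity)
  have h7 : (1 / Real.pi) * ((1 / g) * (a * (u' - u) / S))
      = a / (Real.pi * g * S) * (u' - u) := by
    field_simp
  linarith [h4, h6, h7.le, h7.ge]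

/-- separation of the surface band functions. For `2 < ε ≤ E ≤ E'`,
`Φ_q(k₂,E') - Φ_q(k₂,E) ≤ (q(ε-1)/(πg√(ε(ε-2))))(E'-E)`; consequently, if
`Φ_q(k₂,E') - Φ_q(k₂,E) ≥ 1` then `E' - E ≥ πg√(ε(ε-2))/(q(ε-1))`. -/
theorem surface_band_separation (g : ℝ) (hg : 0 < g) (q : ℕ) (hq : 1 ≤ q)
    (ε E E' : ℝ) (hε : 2 < ε) (hE : ε ≤ E) (hEE' : E ≤ E') (k₂ : ℝ) :
    (Phiq g q k₂ E' - Phiq g q k₂ E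
      ≤ ((q : ℝ) * (ε - 1) / (Real.pi * g * Real.sqrt (ε * (ε - 2)))) * (E' - E)) ∧
    (1 ≤ Phiq g q k₂ E' - Phiq g q k₂ E →
      Real.pi * g * Real.sqrt (ε * (ε - 2)) / ((q : ℝ) * (ε - 1)) ≤ E' - E) := by
  have hpi : 0 < Real.pi := Real.pi_pos
  have hSpos : 0 < Real.sqrt (ε * (ε - 2)) := Real.sqrt_pos.mpr (by nlinarith)
  set S := Real.sqrt (ε * (ε - 2)) with hSdef
  have hqpos : (0:ℝ) < (q : ℝ) := by exact_mod_cast hq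
  have main : Phiq g q k₂ E' - Phiq g q k₂ E
      ≤ ((q : ℝ) * (ε - 1) / (Real.pi * g * S)) * (E' - E) := by
    rw [Phiq, Phiq, ← Finset.sum_sub_distrib]
    have hb : ∀ l ∈ Finset.range q,
        phi g (k₂ + (l : ℝ) / (q : ℝ)) E' - phi g (k₂ + (l : ℝ) / (q : ℝ)) E
        ≤ ((ε - 1) / (Real.pi * g * S)) * (E' - E) := fun l _ =>
      phi_diff_le g hg ε E E' hε hE hEE' _
    calc ∑ l ∈ Finset.range q,
          (phi g (k₂ + (l : ℝ) / (q : ℝ)) E' - phi g (k₂ + (l : ℝ) / (q : ℝ)) E)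
        ≤ ∑ _l ∈ Finset.range q, ((ε - 1) / (Real.pi * g * S)) * (E' - E) :=
          Finset.sum_le_sum hb
      _ = (q : ℝ) * (((ε - 1) / (Real.pi * g * S)) * (E' - E)) := by
          rw [Finset.sum_const, Finset.card_range, nsmul_eq_mul]
      _ = ((q : ℝ) * (ε - 1) / (Real.pi * g * S)) * (E' - E) := by ring
  refine ⟨main, fun h1 => ?_⟩
  have hP : 0 < Real.pi * g * S := by positivity
  have hQ : 0 < (q : ℝ) * (ε - 1) := by nlinarith
  rw [div_le_iff₀ hQ]
  have h2 : 1 ≤ ((q : ℝ) * (ε - 1) / (Real.pi * g * S)) * (E' - E) := le_trans h1 main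
  have h3 := mul_le_mul_of_nonneg_left h2 hP.le
  rw [mul_one] at h3
  have e : Real.pi * g * S * (((q : ℝ) * (ε - 1) / (Real.pi * g * S)) * (E' - E))
      = (E' - E) * ((q : ℝ) * (ε - 1)) := by
    field_simp
  linarith [e.le, e.ge]
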